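/- arXiv:1911.02841 — 2 statements merged into one kernel-verified Lean document; each statement's English description precedes it below -/
import Mathlib

section
/- Let α>-1 and x∈ℂ be fixed. Then as q tends to 1 from below, sin_α((1-q)x;q²) tends to (x/(2(α+1)))·₀F₁(—;α+2;-x²/4) = (x/(2(α+1))) Σ_{k=0}^∞ (-x²/4)^k / (k! (α+2)_k), where (α+2)_k = (α+2)(α+3)⋯(α+k+1) is the Pochhammer symbol. -/
noncomputable section

open Complex Filter Topology

/-- Finite q-Pochhammer symbol (a;q)ₖ over ℂ. -/
def qPoch (a q : ℂ) (k : ℕ) : ℂ := ∏ j ∈ Finset.range k, (1 - a * q ^ j)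

/-- Finite q-Pochhammer symbol (a;q)ₖ over ℝ. -/
def qPochR (a q : ℝ) (k : ℕ) : ℝ := ∏ j ∈ Finset.range k, (1 - a * q ^ j)

/-- Infinite q-Pochhammer symbol (a;q)_∞ over ℝ. -/
def qPochInf (a q : ℝ) : ℝ := ∏' k : ℕ, (1 - a * q ^ k)

/-- k-th term of the generalized q²-cosine series cos_α(x;q²). -/
def qCosTerm (q α : ℝ) (x : ℂ) (k : ℕ) : ℂ :=
  (-1) ^ k * (q : ℂ) ^ (k * (k + 1)) * x ^ (2 * k) /
    (qPoch ((q ^ (2 * α + 2 : ℝ) : ℝ) : ℂ) ((q : ℂ) ^ 2) k *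
      qPoch ((q : ℂ) ^ 2) ((q : ℂ) ^ 2) k)

/-- Generalized q²-cosine cos_α(x;q²). -/
def qCos (q α : ℝ) (x : ℂ) : ℂ := ∑' k : ℕ, qCosTerm q α x k

/-- k-th term of the generalized q²-sine series sin_α(x;q²). -/
def qSinTerm (q α : ℝ) (x : ℂ) (k : ℕ) : ℂ :=
  (-1) ^ k * (q : ℂ) ^ (k * (k + 1)) * x ^ (2 * k + 1) /
    (qPoch ((q ^ (2 * α + 2 : ℝ) : ℝ) : ℂ) ((q : ℂ) ^ 2) (k + 1) *
      qPoch ((q : ℂ) ^ 2) ((q : ℂ) ^ 2) k)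

/-- Generalized q²-sine sin_α(x;q²). -/
def qSin (q α : ℝ) (x : ℂ) : ℂ := ∑' k : ℕ, qSinTerm q α x k

/-- Generalized q²-exponential e_α(x;q²) = cos_α(-ix;q²) + i·sin_α(-ix;q²). -/
def qExp (q α : ℝ) (x : ℂ) : ℂ :=
  qCos q α (-Complex.I * x) + Complex.I * qSin q α (-Complex.I * x)

/-- The constant C_{α,q} = (1-q)^α (q^{2α+2};q²)_∞ / (2 (q²;q²)_∞). -/
def Cconst (q α : ℝ) : ℝ :=
  (1 - q) ^ α * qPochInf (q ^ (2 * α + 2 : ℝ)) (q ^ 2) / (2 * qPochInf (q ^ 2) (q ^ 2))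

/-- Bilateral q-Jackson integral ∫_{-∞}^∞ F(x) d_q x, for a ℂ-valued integrand. -/
def jacksonBi (q : ℝ) (F : ℝ → ℂ) : ℂ :=
  ((1 - q : ℝ) : ℂ) * ∑' n : ℤ, (q : ℂ) ^ n * (F (q ^ n) + F (-(q ^ n)))

/-- Bilateral q-Jackson integral ∫_{-∞}^∞ F(x) d_q x, for an ℝ-valued integrand. -/
def jacksonBiR (q : ℝ) (F : ℝ → ℝ) : ℝ :=
  (1 - q) * ∑' n : ℤ, q ^ n * (F (q ^ n) + F (-(q ^ n)))

/-- Generalized q²-Fourier transform f̂(x;q²). -/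
def qFourier (q α : ℝ) (f : ℝ → ℂ) (x : ℝ) : ℂ :=
  (Cconst q α : ℂ) * jacksonBi q (fun t =>
    f t * qExp q α (-Complex.I * (((1 - q) * t * x : ℝ) : ℂ)) * ((|t| ^ (2 * α + 1) : ℝ) : ℂ))

/-- Generalized q-differential operator ∂_{q,α} (for x ≠ 0). -/
def qDeriv (q α : ℝ) (f : ℝ → ℂ) (x : ℝ) : ℂ :=
  (f (q⁻¹ * x) + f (-(q⁻¹ * x)) - ((q ^ (2 * α + 1 : ℝ) : ℝ) : ℂ) * (f x + f (-x))) /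
      (2 * ((1 - q : ℝ) : ℂ) * (x : ℂ)) +
    (f x - f (-x) - ((q ^ (2 * α + 1 : ℝ) : ℝ) : ℂ) * (f (q * x) - f (-(q * x)))) /
      (2 * ((1 - q : ℝ) : ℂ) * (x : ℂ))

/-- q-number [x]_q = (1 - q^x)/(1 - q). -/
def qBracket (q x : ℝ) : ℝ := (1 - q ^ x) / (1 - q)

/-- Generalized q-factorial [m]_{q,α}! = ∏_{j=1}^m [j]_{q,α}, where
[2n]_{q,α} = [2n+2α+1]_q and [2n+1]_{q,α} = [2n+2α+2]_q (both equal [j+2α+1]_q for j = 2n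
resp. j = 2n+1). -/
def qFactG (q α : ℝ) (m : ℕ) : ℝ :=
  ∏ j ∈ Finset.range m, qBracket q ((j : ℝ) + 1 + 2 * α + 1)

/-- Generalized q-shifted factorial (q;q)_{m,α} = (1-q)^m [m]_{q,α}!. -/
def qShiftG (q α : ℝ) (m : ℕ) : ℝ := (1 - q) ^ m * qFactG q α m

/-- q-Gamma function Γ_q(z) = ((q;q)_∞/(q^z;q)_∞)(1-q)^{1-z}. -/
def qGammaF (q z : ℝ) : ℝ := qPochInf q q / qPochInf (q ^ z) q * (1 - q) ^ (1 - z)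

section Aux
open Real Filter Topology

private lemma key_ineq {q s : ℝ} (hq0 : 0 < q) (hq1 : q < 1) (hs : 0 < s) :
    s * q ^ s * (1 - q) ≤ 1 - q ^ s := by
  have hlog : Real.log q ≤ q - 1 := by
    have := Real.log_le_sub_one_of_pos hq0; linarith
  have hrw : q ^ s = Real.exp (s * Real.log q) := by
    rw [Real.rpow_def_of_pos hq0, mul_comm]
  set u := s * Real.log q with hu
  have hneg : 0 ≤ -u := by
    have : Real.log q ≤ 0 := Real.log_nonpos hq0.le hq1.le
    nlinarith
  have h1 : 1 + (-u) ≤ Real.exp (-u) := by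
    have := Real.add_one_le_exp (-u); linarith
  have h2 : (-u) * Real.exp u ≤ 1 - Real.exp u := by
    have he : 0 < Real.exp u := Real.exp_pos u
    have hprod : Real.exp (-u) * Real.exp u = 1 := by
      rw [← Real.exp_add]; simp
    nlinarith
  have h3 : s * (1 - q) ≤ -u := by
    have : s * Real.log q ≤ s * (q - 1) := by nlinarith
    simp only [hu]; nlinarith
  have hqs : 0 < q ^ s := Real.rpow_pos_of_pos hq0 s
  calc s * q ^ s * (1 - q) = (s * (1-q)) * q ^ s := by ring
    _ ≤ (-u) * q ^ s := by nlinarith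
    _ = (-u) * Real.exp u := by rw [hrw]
    _ ≤ 1 - Real.exp u := h2
    _ = 1 - q ^ s := by rw [hrw]

private lemma one_sub_rpow_pos {q s : ℝ} (hq0 : 0 < q) (hq1 : q < 1) (hs : 0 < s) :
    0 < 1 - q ^ s := by
  have := Real.rpow_lt_one hq0.le hq1 hs; linarith

private lemma max_bound {q s : ℝ} (hq0 : 0 < q) (hq1 : q < 1) (hs : 0 < s) :
    1 - q ≤ max (2/s) (2*(1-q)) * (1 - q ^ s) := by
  have hpos := one_sub_rpow_pos hq0 hq1 hs
  rcases le_or_gt (1/2 : ℝ) (q ^ s) with h | h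
  · have hk := key_ineq hq0 hq1 hs
    have h2 : 1 - q ≤ (2/s) * (1 - q ^ s) := by
      rw [div_mul_eq_mul_div, le_div_iff₀ hs]; nlinarith
    exact h2.trans (mul_le_mul_of_nonneg_right (le_max_left _ _) hpos.le)
  · have h2 : 1 - q ≤ (2*(1-q)) * (1 - q ^ s) := by nlinarith
    exact h2.trans (mul_le_mul_of_nonneg_right (le_max_right _ _) hpos.le)

private lemma ratio_tendsto {s : ℝ} (hs : 0 < s) :
    Tendsto (fun q : ℝ => (1 - q) / (1 - q ^ s)) (nhdsWithin 1 (Set.Ioo 0 1)) (nhds s⁻¹) := by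
  have hd : HasDerivAt (fun q : ℝ => q ^ s) s 1 := by
    have := Real.hasDerivAt_rpow_const (x := (1:ℝ)) (p := s) (Or.inl one_ne_zero)
    simpa using this
  have hslope := hasDerivAt_iff_tendsto_slope.mp hd
  have hsub : nhdsWithin (1:ℝ) (Set.Ioo 0 1) ≤ nhdsWithin 1 {(1:ℝ)}ᶜ :=
    nhdsWithin_mono _ fun y hy => ne_of_lt hy.2
  have h1 : Tendsto (fun q : ℝ => (q ^ s - 1) / (q - 1)) (nhdsWithin 1 (Set.Ioo 0 1)) (nhds s) := by
    have := hslope.mono_left hsub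
    simpa [slope_fun_def, Real.one_rpow, div_eq_inv_mul] using this
  refine (h1.inv₀ hs.ne').congr fun q => ?_
  rw [inv_div, show (1:ℝ) - q = -(q - 1) by ring, show (1:ℝ) - q ^ s = -(q ^ s - 1) by ring,
    neg_div_neg_eq]

/-- The real part of the k-th sine term, after substituting `(1-q)x`. -/
def realTerm (q α : ℝ) (k : ℕ) : ℝ :=
  q ^ (k * (k + 1)) * (1 - q) ^ (2 * k + 1) /
    (qPochR (q ^ (2 * α + 2 : ℝ)) (q ^ 2) (k + 1) * qPochR (q ^ 2) (q ^ 2) k)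

/-- The limit of `realTerm` as `q → 1⁻`. -/
def Lr (α : ℝ) (k : ℕ) : ℝ :=
  (∏ j ∈ Finset.range (k+1), (2*α+2+2*(j:ℝ))⁻¹) * ∏ j ∈ Finset.range k, (2*((j:ℝ)+1))⁻¹

private lemma qpow_eq {q : ℝ} (hq : 0 < q) (s : ℝ) (j : ℕ) :
    q ^ s * (q ^ 2) ^ j = q ^ (s + 2 * (j:ℝ)) := by
  rw [← pow_mul, ← Real.rpow_natCast q (2 * j), ← Real.rpow_add hq]
  push_cast; ring_nf

private lemma qPochR_eq {q : ℝ} (hq : 0 < q) (s : ℝ) (k : ℕ) :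
    qPochR (q ^ s) (q ^ 2) k = ∏ j ∈ Finset.range k, (1 - q ^ (s + 2 * (j:ℝ))) := by
  unfold qPochR
  exact Finset.prod_congr rfl fun j _ => by rw [qpow_eq hq]

private lemma sq_as_rpow (q : ℝ) : q ^ 2 = q ^ (2:ℝ) := by
  rw [← Real.rpow_natCast q 2]; norm_num

private lemma qPochR_sq_eq {q : ℝ} (hq : 0 < q) (k : ℕ) :
    qPochR (q ^ 2) (q ^ 2) k = ∏ j ∈ Finset.range k, (1 - q ^ (2 * ((j:ℝ) + 1))) := by
  rw [show qPochR (q ^ 2) (q ^ 2) k = qPochR (q ^ (2:ℝ)) (q ^ 2) k by rw [← sq_as_rpow q],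
    qPochR_eq hq]
  exact Finset.prod_congr rfl fun j _ => by ring_nf

private lemma qPochR_pos {q s : ℝ} (hq0 : 0 < q) (hq1 : q < 1) (hs : 0 < s) (k : ℕ) :
    0 < qPochR (q ^ s) (q ^ 2) k := by
  rw [qPochR_eq hq0]
  exact Finset.prod_pos fun j _ => one_sub_rpow_pos hq0 hq1 (by positivity)

private lemma qPochR_sq_pos {q : ℝ} (hq0 : 0 < q) (hq1 : q < 1) (k : ℕ) :
    0 < qPochR (q ^ 2) (q ^ 2) k := by
  rw [qPochR_sq_eq hq0]
  exact Finset.prod_pos fun j _ => one_sub_rpow_pos hq0 hq1 (by positivity)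

private lemma realTerm_nonneg {q : ℝ} (hq0 : 0 < q) (hq1 : q < 1) {α : ℝ} (hα : -1 < α) (k : ℕ) :
    0 ≤ realTerm q α k := by
  have hs0 : (0:ℝ) < 2*α+2 := by linarith
  have h1 := qPochR_pos hq0 hq1 hs0 (k+1)
  have h2 := qPochR_sq_pos hq0 hq1 k
  unfold realTerm
  apply div_nonneg
  · exact mul_nonneg (pow_nonneg hq0.le _) (pow_nonneg (by linarith) _)
  · exact (mul_pos h1 h2).le

private lemma realTerm_prod_form {q : ℝ} (hq0 : 0 < q) (α : ℝ) (k : ℕ) :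
    realTerm q α k = q ^ (k * (k + 1)) *
      (∏ j ∈ Finset.range (k+1), ((1 - q) / (1 - q ^ (2*α+2 + 2*(j:ℝ))))) *
      (∏ j ∈ Finset.range k, ((1 - q) / (1 - q ^ (2 * ((j:ℝ)+1))))) := by
  unfold realTerm
  rw [qPochR_eq hq0, qPochR_sq_eq hq0, Finset.prod_div_distrib, Finset.prod_div_distrib,
    Finset.prod_const, Finset.prod_const, Finset.card_range, Finset.card_range]
  ring

private lemma realTerm_tendsto (α : ℝ) (hα : -1 < α) (k : ℕ) :
    Tendsto (fun q => realTerm q α k) (nhdsWithin 1 (Set.Ioo 0 1)) (nhds (Lr α k)) := by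
  have hev : ∀ᶠ q in nhdsWithin (1:ℝ) (Set.Ioo 0 1), realTerm q α k = q ^ (k * (k + 1)) *
      (∏ j ∈ Finset.range (k+1), ((1 - q) / (1 - q ^ (2*α+2 + 2*(j:ℝ))))) *
      (∏ j ∈ Finset.range k, ((1 - q) / (1 - q ^ (2 * ((j:ℝ)+1))))) := by
    filter_upwards [self_mem_nhdsWithin] with q hq
    exact realTerm_prod_form hq.1 α k
  rw [show Lr α k = 1 * (∏ j ∈ Finset.range (k+1), (2*α+2+2*(j:ℝ))⁻¹) *
      (∏ j ∈ Finset.range k, (2*((j:ℝ)+1))⁻¹) by rw [Lr]; ring]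
  refine Tendsto.congr' (hev.mono fun q h => h.symm) ?_
  refine Tendsto.mul (Tendsto.mul ?_ ?_) ?_
  · have : Tendsto (fun q : ℝ => q ^ (k * (k+1))) (nhdsWithin 1 (Set.Ioo 0 1))
        (nhds (1 ^ (k*(k+1)))) :=
      ((continuous_pow _).tendsto 1).mono_left nhdsWithin_le_nhds
    simpa using this
  · exact tendsto_finset_prod _ fun j _ =>
      ratio_tendsto (by have : (0:ℝ) ≤ (j:ℝ) := j.cast_nonneg; nlinarith)
  · exact tendsto_finset_prod _ fun j _ =>
      ratio_tendsto (by have : (0:ℝ) ≤ (j:ℝ) := j.cast_nonneg; nlinarith)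

private lemma realTerm_le {α : ℝ} (hα : -1 < α) {q0 q : ℝ} (hq0half : 1/2 ≤ q0) (hq : q0 < q)
    (hq1 : q < 1) (hε1 : 2*(1-q0) ≤ 1) (k : ℕ) :
    realTerm q α k ≤ max (2/(2*α+2)) 1 *
      (∏ j ∈ Finset.range k, max (1/((j:ℝ)+1)) (2*(1-q0)))^2 := by
  have hq0 : (0:ℝ) < q := by linarith
  have hs0 : (0:ℝ) < 2*α+2 := by linarith
  have hεq : 2*(1-q) ≤ 2*(1-q0) := by linarith
  have hD2eq : qPochR (q^2) (q^2) k = ∏ j ∈ Finset.range k, (1 - q ^ (2 * ((j:ℝ) + 1))) :=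
    qPochR_sq_eq hq0 k
  have hD2pos : 0 < qPochR (q^2) (q^2) k := qPochR_sq_pos hq0 hq1 k
  have hs0q : 0 < 1 - q ^ (2*α+2 : ℝ) := one_sub_rpow_pos hq0 hq1 hs0
  have hD1pos : 0 < qPochR (q ^ (2*α+2 : ℝ)) (q^2) (k+1) := qPochR_pos hq0 hq1 hs0 (k+1)
  -- D1 ≥ (1 - q^s0) * D2
  have hD1ge : (1 - q ^ (2*α+2 : ℝ)) * qPochR (q^2) (q^2) k
      ≤ qPochR (q ^ (2*α+2 : ℝ)) (q^2) (k+1) := by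
    rw [qPochR_eq hq0, Finset.prod_range_succ']
    have hmono : (∏ j ∈ Finset.range k, (1 - q ^ (2 * ((j:ℝ) + 1)))) ≤
        ∏ j ∈ Finset.range k, (1 - q ^ (2*α+2 + 2 * ((j+1:ℕ):ℝ))) := by
      apply Finset.prod_le_prod
      · intro j _; exact (one_sub_rpow_pos hq0 hq1 (by positivity)).le
      · intro j _
        have hle : q ^ (2*α+2 + 2 * ((j+1:ℕ):ℝ)) ≤ q ^ (2 * ((j:ℝ)+1)) := by
          apply Real.rpow_le_rpow_of_exponent_ge hq0 hq1.le
          push_cast; linarith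
        linarith
    have h0 : q ^ (2*α+2 + 2 * ((0:ℕ):ℝ)) = q ^ (2*α+2 : ℝ) := by norm_num
    rw [h0, mul_comm]
    apply mul_le_mul_of_nonneg_right _ hs0q.le
    rw [hD2eq]
    exact hmono
  -- step 1
  have hstep1 : realTerm q α k ≤ (1-q)^(2*k+1) /
      ((1 - q ^ (2*α+2 : ℝ)) * qPochR (q^2) (q^2) k * qPochR (q^2) (q^2) k) := by
    unfold realTerm
    have hnum : q ^ (k*(k+1)) * (1-q)^(2*k+1) ≤ (1-q)^(2*k+1) := by
      have h1 : q ^ (k*(k+1)) ≤ 1 := pow_le_one₀ hq0.le hq1.le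
      have h2 : (0:ℝ) ≤ (1-q)^(2*k+1) := pow_nonneg (by linarith) _
      nlinarith
    have hd : (1 - q ^ (2*α+2 : ℝ)) * qPochR (q^2) (q^2) k * qPochR (q^2) (q^2) k
        ≤ qPochR (q ^ (2*α+2 : ℝ)) (q^2) (k+1) * qPochR (q^2) (q^2) k :=
      mul_le_mul_of_nonneg_right hD1ge hD2pos.le
    have hdpos : 0 < (1 - q ^ (2*α+2 : ℝ)) * qPochR (q^2) (q^2) k * qPochR (q^2) (q^2) k := by
      positivity
    calc q ^ (k*(k+1)) * (1-q)^(2*k+1) / (qPochR (q ^ (2*α+2:ℝ)) (q^2) (k+1) * qPochR (q^2) (q^2) k)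
        ≤ (1-q)^(2*k+1) / (qPochR (q ^ (2*α+2:ℝ)) (q^2) (k+1) * qPochR (q^2) (q^2) k) := by
          apply div_le_div_of_nonneg_right hnum (by positivity)
      _ ≤ (1-q)^(2*k+1) / ((1 - q ^ (2*α+2:ℝ)) * qPochR (q^2) (q^2) k * qPochR (q^2) (q^2) k) :=
          div_le_div_of_nonneg_left (pow_nonneg (by linarith) _) hdpos hd
  -- step 2
  have hsplit : (1-q)^(2*k+1) /
      ((1 - q ^ (2*α+2:ℝ)) * qPochR (q^2) (q^2) k * qPochR (q^2) (q^2) k)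
      = ((1-q)/(1-q^(2*α+2:ℝ))) * ((1-q)^k/qPochR (q^2) (q^2) k)^2 := by
    field_simp
    ring
  -- factor bounds
  have hfac1 : (1-q)/(1-q^(2*α+2:ℝ)) ≤ max (2/(2*α+2)) 1 := by
    rw [div_le_iff₀ hs0q]
    calc 1 - q ≤ max (2/(2*α+2)) (2*(1-q)) * (1 - q ^ (2*α+2:ℝ)) := max_bound hq0 hq1 hs0
      _ ≤ max (2/(2*α+2)) 1 * (1 - q ^ (2*α+2:ℝ)) := by
          apply mul_le_mul_of_nonneg_right _ hs0q.le
          exact max_le_max le_rfl (by linarith)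
  have hsplit2 : ∏ j ∈ Finset.range k, ((1-q)/(1 - q^(2*((j:ℝ)+1))))
      = (1-q)^k / qPochR (q^2) (q^2) k := by
    rw [Finset.prod_div_distrib, Finset.prod_const, Finset.card_range, ← hD2eq]
  have hfac2 : (1-q)^k/qPochR (q^2) (q^2) k
      ≤ ∏ j ∈ Finset.range k, max (1/((j:ℝ)+1)) (2*(1-q0)) := by
    rw [← hsplit2]
    apply Finset.prod_le_prod
    · intro j _
      have := one_sub_rpow_pos hq0 hq1 (show (0:ℝ) < 2*((j:ℝ)+1) by positivity)
      exact div_nonneg (by linarith) this.le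
    · intro j _
      have hpos := one_sub_rpow_pos hq0 hq1 (show (0:ℝ) < 2*((j:ℝ)+1) by positivity)
      rw [div_le_iff₀ hpos]
      calc 1 - q ≤ max (2/(2*((j:ℝ)+1))) (2*(1-q)) * (1 - q ^ (2*((j:ℝ)+1))) :=
            max_bound hq0 hq1 (by positivity)
        _ ≤ max (1/((j:ℝ)+1)) (2*(1-q0)) * (1 - q ^ (2*((j:ℝ)+1))) := by
            apply mul_le_mul_of_nonneg_right _ hpos.le
            apply max_le_max _ hεq
            rw [show (2:ℝ)/(2*((j:ℝ)+1)) = 1/((j:ℝ)+1) by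
              rw [div_eq_div_iff (by positivity) (by positivity)]; ring]
  have hfac2nn : 0 ≤ (1-q)^k/qPochR (q^2) (q^2) k :=
    div_nonneg (pow_nonneg (by linarith) _) hD2pos.le
  calc realTerm q α k ≤ _ := hstep1
    _ = ((1-q)/(1-q^(2*α+2:ℝ))) * ((1-q)^k/qPochR (q^2) (q^2) k)^2 := hsplit
    _ ≤ max (2/(2*α+2)) 1 * (∏ j ∈ Finset.range k, max (1/((j:ℝ)+1)) (2*(1-q0)))^2 := by
        apply mul_le_mul hfac1 (pow_le_pow_left₀ hfac2nn hfac2 2) (pow_nonneg hfac2nn 2)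
          (le_trans (by norm_num) (le_max_right (2/(2*α+2)) 1))

end Aux

/-- lim_{q→1⁻} sin_α((1-q)x;q²) = (x/(2(α+1))) ₀F₁(—;α+2;-x²/4). -/
theorem qSin_tendsto_hypergeom (α : ℝ) (hα : -1 < α) (x : ℂ) :
    Filter.Tendsto (fun q : ℝ => qSin q α (((1 - q : ℝ) : ℂ) * x))
      (nhdsWithin 1 (Set.Ioo 0 1))
      (nhds ((x / (2 * ((α : ℂ) + 1))) * ∑' k : ℕ, (-x ^ 2 / 4) ^ k /
        ((k.factorial : ℂ) * ∏ j ∈ Finset.range k, ((α : ℂ) + 2 + (j : ℂ))))) := by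
  have hs0 : (0:ℝ) < 2*α+2 := by linarith
  -- rewrite each term via realTerm
  have hterm : ∀ (q : ℝ) (k : ℕ), qSinTerm q α (((1 - q : ℝ) : ℂ) * x) k
      = (-1) ^ k * x ^ (2 * k + 1) * ((realTerm q α k : ℝ) : ℂ) := by
    intro q k
    have hpoch : ∀ (a b : ℝ) (m : ℕ), qPoch (a : ℂ) (b : ℂ) m = ((qPochR a b m : ℝ) : ℂ) := by
      intro a b m
      unfold qPoch qPochR
      push_cast
      rfl
    unfold qSinTerm realTerm
    rw [show ((q:ℂ))^2 = (((q^2 : ℝ)):ℂ) by push_cast; ring, hpoch, hpoch]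
    push_cast
    rw [mul_pow]
    ring
  -- identification of the limit terms
  have hLc : ∀ k : ℕ, ((-1:ℂ)) ^ k * x ^ (2 * k + 1) * ((Lr α k : ℝ) : ℂ)
      = (x / (2 * ((α : ℂ) + 1))) * ((-x ^ 2 / 4) ^ k /
        ((k.factorial : ℂ) * ∏ j ∈ Finset.range k, ((α : ℂ) + 2 + (j : ℂ)))) := by
    intro k
    have hP : (∏ j ∈ Finset.range k, ((α : ℂ) + 2 + (j : ℂ))) ≠ 0 := by
      apply Finset.prod_ne_zero_iff.mpr
      intro j _
      rw [show (α : ℂ) + 2 + (j : ℂ) = ((α + 2 + (j:ℝ) : ℝ) : ℂ) by push_cast; ring,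
        Complex.ofReal_ne_zero]
      have h0 : (0:ℝ) ≤ (j:ℝ) := j.cast_nonneg
      intro h
      nlinarith
    have hLr : ((Lr α k : ℝ) : ℂ) = (∏ j ∈ Finset.range (k+1), (2*(α:ℂ)+2+2*(j:ℂ)))⁻¹ *
        (∏ j ∈ Finset.range k, (2*((j:ℂ)+1)))⁻¹ := by
      unfold Lr
      push_cast
      rw [Finset.prod_inv_distrib, Finset.prod_inv_distrib]
    have hA : ∏ j ∈ Finset.range (k+1), (2*(α:ℂ)+2+2*(j:ℂ))
        = 2^(k+1) * ((α:ℂ)+1) * ∏ j ∈ Finset.range k, ((α:ℂ)+2+(j:ℂ)) := by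
      rw [Finset.prod_range_succ']
      rw [Finset.prod_congr rfl (fun j (_ : j ∈ Finset.range k) =>
        show 2*(α:ℂ)+2+2*((j+1:ℕ):ℂ) = 2*((α:ℂ)+2+(j:ℂ)) by push_cast; ring)]
      rw [Finset.prod_mul_distrib, Finset.prod_const, Finset.card_range]
      push_cast; ring
    have hB : ∏ j ∈ Finset.range k, (2*((j:ℂ)+1)) = 2^k * (k.factorial : ℂ) := by
      rw [Finset.prod_mul_distrib, Finset.prod_const, Finset.card_range]
      congr 1
      rw [← Finset.prod_range_add_one_eq_factorial]
      push_cast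
      rfl
    have hα1 : ((α:ℂ)+1) ≠ 0 := by
      rw [show (α:ℂ)+1 = ((α+1 : ℝ) : ℂ) by push_cast; ring, Complex.ofReal_ne_zero]
      intro h; nlinarith
    have hk : (k.factorial : ℂ) ≠ 0 := Nat.cast_ne_zero.mpr k.factorial_ne_zero
    rw [hLr, hA, hB]
    rw [show (-x^2/4 : ℂ)^k = (-1)^k * x^(2*k) / (2^k * 2^k) by
      rw [div_pow, neg_pow, ← pow_mul]
      congr 1
      rw [← mul_pow]; norm_num]
    field_simp
    ring
  -- choice of q0
  set q0 : ℝ := 1 - 1/(8*(‖x‖+1)^2) with hq0def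
  have hxn : (0:ℝ) ≤ ‖x‖ := norm_nonneg x
  have hY : (0:ℝ) < (‖x‖+1)^2 := by positivity
  have hx1 : (1:ℝ) ≤ (‖x‖+1)^2 := by nlinarith
  have hsmall : 1/(8*(‖x‖+1)^2) ≤ 1/8 :=
    div_le_div_of_nonneg_left (by norm_num) (by norm_num) (by nlinarith)
  have hsmallpos : 0 < 1/(8*(‖x‖+1)^2) := by positivity
  have hq0half : (1/2:ℝ) ≤ q0 := by rw [hq0def]; linarith
  have hq01 : q0 < 1 := by rw [hq0def]; linarith
  have hεpos : 0 < 2*(1-q0) := by rw [hq0def]; linarith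
  have hε1 : 2*(1-q0) ≤ 1 := by rw [hq0def]; linarith
  have hεx : (2*(1-q0)) * (‖x‖+1)^2 ≤ 1/2 := by
    have : 2*(1-q0) = 2*(1/(8*(‖x‖+1)^2)) := by rw [hq0def]; ring
    rw [this]
    rw [show 2*(1/(8*(‖x‖+1)^2))*(‖x‖+1)^2 = (2*(‖x‖+1)^2)/(8*(‖x‖+1)^2) by ring]
    rw [div_le_iff₀ (by positivity)]
    nlinarith
  have hrx : ‖x‖^2 * (2*(1-q0))^2 ≤ 1/2 := by
    have h1 : ‖x‖^2 ≤ (‖x‖+1)^2 := by nlinarith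
    nlinarith [hεpos, hεx, hε1]
  -- the dominating bound
  have hBnn : ∀ k : ℕ, 0 ≤ ∏ j ∈ Finset.range k, max (1/((j:ℝ)+1)) (2*(1-q0)) :=
    fun k => Finset.prod_nonneg fun j _ => le_trans (by positivity) (le_max_right _ _)
  have hC0nn : (0:ℝ) ≤ max (2/(2*α+2)) 1 := le_trans zero_le_one (le_max_right _ _)
  have hboundnn : ∀ k : ℕ, 0 ≤ ‖x‖^(2*k+1) * (max (2/(2*α+2)) 1 *
      (∏ j ∈ Finset.range k, max (1/((j:ℝ)+1)) (2*(1-q0)))^2) := by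
    intro k
    have := hBnn k
    positivity
  have hsum : Summable (fun k : ℕ => ‖x‖^(2*k+1) * (max (2/(2*α+2)) 1 *
      (∏ j ∈ Finset.range k, max (1/((j:ℝ)+1)) (2*(1-q0)))^2)) := by
    apply summable_of_ratio_norm_eventually_le (r := 1/2) (by norm_num)
    obtain ⟨K, hK⟩ := exists_nat_ge (1/(2*(1-q0)))
    have hev : ∀ᶠ k : ℕ in atTop, 1/((k:ℝ)+1) ≤ 2*(1-q0) := by
      filter_upwards [eventually_ge_atTop K] with k hk
      have hkK : (K:ℝ) ≤ (k:ℝ) := Nat.cast_le.mpr hk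
      rw [div_le_iff₀ (by positivity)]
      rw [div_le_iff₀ hεpos] at hK
      nlinarith [mul_le_mul_of_nonneg_left (show (K:ℝ) ≤ (k:ℝ)+1 by linarith) hεpos.le]
    filter_upwards [hev] with k hk
    rw [Real.norm_of_nonneg (hboundnn _), Real.norm_of_nonneg (hboundnn _)]
    rw [Finset.prod_range_succ, max_eq_right hk]
    calc ‖x‖^(2*(k+1)+1) * (max (2/(2*α+2)) 1 *
          ((∏ j ∈ Finset.range k, max (1/((j:ℝ)+1)) (2*(1-q0))) * (2*(1-q0)))^2)
        = (‖x‖^2 * (2*(1-q0))^2) * (‖x‖^(2*k+1) * (max (2/(2*α+2)) 1 *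
          (∏ j ∈ Finset.range k, max (1/((j:ℝ)+1)) (2*(1-q0)))^2)) := by ring
      _ ≤ (1/2) * (‖x‖^(2*k+1) * (max (2/(2*α+2)) 1 *
          (∏ j ∈ Finset.range k, max (1/((j:ℝ)+1)) (2*(1-q0)))^2)) :=
          mul_le_mul_of_nonneg_right hrx (hboundnn k)
  -- eventual bound
  have hbd : ∀ᶠ q in nhdsWithin (1:ℝ) (Set.Ioo 0 1), ∀ k : ℕ,
      ‖qSinTerm q α (((1 - q : ℝ) : ℂ) * x) k‖ ≤ ‖x‖^(2*k+1) * (max (2/(2*α+2)) 1 *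
      (∏ j ∈ Finset.range k, max (1/((j:ℝ)+1)) (2*(1-q0)))^2) := by
    have hq0lt : ∀ᶠ q in nhdsWithin (1:ℝ) (Set.Ioo 0 1), q0 < q :=
      (eventually_gt_nhds hq01).filter_mono nhdsWithin_le_nhds
    filter_upwards [self_mem_nhdsWithin, hq0lt] with q hq hqgt
    intro k
    rw [hterm q k, norm_mul, norm_mul, norm_pow, norm_pow, norm_neg, norm_one, one_pow,
      one_mul, Complex.norm_real, Real.norm_of_nonneg (realTerm_nonneg hq.1 hq.2 hα k)]
    exact mul_le_mul_of_nonneg_left (realTerm_le hα hq0half hqgt hq.2 hε1 k) (by positivity)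
  -- termwise limits
  have hlim : ∀ k : ℕ, Tendsto (fun q : ℝ => qSinTerm q α (((1 - q : ℝ) : ℂ) * x) k)
      (nhdsWithin 1 (Set.Ioo 0 1)) (nhds ((-1:ℂ)^k * x^(2*k+1) * ((Lr α k : ℝ):ℂ))) := by
    intro k
    simp only [hterm]
    exact ((Complex.continuous_ofReal.tendsto _).comp (realTerm_tendsto α hα k)).const_mul _
  -- conclude
  have hT : (x / (2 * ((α : ℂ) + 1))) * ∑' k : ℕ, (-x ^ 2 / 4) ^ k /
      ((k.factorial : ℂ) * ∏ j ∈ Finset.range k, ((α : ℂ) + 2 + (j : ℂ)))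
      = ∑' k : ℕ, ((-1:ℂ)^k * x^(2*k+1) * ((Lr α k : ℝ):ℂ)) := by
    rw [← tsum_mul_left]
    exact tsum_congr fun k => (hLc k).symm
  rw [hT]
  simp only [qSin]
  exact tendsto_tsum_of_dominated_convergence hsum hlim hbd
end
end

section
/- Let x∈ℂ be fixed. Then as q tends to 1 from below, cos_{-1/2}((1-q)x;q²) tends to cos x, where cos_{-1/2}(y;q²) = Σ_{k=0}^∞ (-1)^k q^{k(k+1)} y^{2k} / ((q;q²)_k (q²;q²)_k). -/
noncomputable section

open Complex Filter Topology

def myS (q : ℝ) (n : ℕ) : ℝ := ∑ j ∈ Finset.range n, q ^ j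

def myP (q : ℝ) (k : ℕ) : ℝ := ∏ m ∈ Finset.range (2 * k), myS q (m + 1)

lemma poch_merge (q : ℂ) (k : ℕ) :
    qPoch q (q ^ 2) k * qPoch (q ^ 2) (q ^ 2) k
      = ∏ m ∈ Finset.range (2 * k), (1 - q ^ (m + 1)) := by
  induction k with
  | zero => simp [qPoch]
  | succ k ih =>
    simp only [qPoch] at ih ⊢
    rw [Finset.prod_range_succ, Finset.prod_range_succ,
      show 2 * (k + 1) = 2 * k + 1 + 1 by ring, Finset.prod_range_succ,
      Finset.prod_range_succ, ← ih]
    ring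

lemma one_sub_pow (q : ℂ) (n : ℕ) :
    1 - q ^ n = (1 - q) * ∑ j ∈ Finset.range n, q ^ j := by
  linear_combination geom_sum_mul q n

lemma myS_one_le {q : ℝ} (hq : 0 ≤ q) (m : ℕ) : 1 ≤ myS q (m + 1) := by
  rw [myS, Finset.sum_range_succ']
  simp only [pow_zero]
  have : 0 ≤ ∑ i ∈ Finset.range m, q ^ (i + 1) :=
    Finset.sum_nonneg fun i _ => pow_nonneg hq _
  linarith

lemma myP_pos {q : ℝ} (hq : 0 ≤ q) (k : ℕ) : 0 < myP q k :=
  Finset.prod_pos fun m _ => lt_of_lt_of_le one_pos (myS_one_le hq m)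

lemma myS_mono {a b : ℝ} (ha : 0 ≤ a) (hab : a ≤ b) (n : ℕ) : myS a n ≤ myS b n :=
  Finset.sum_le_sum fun i _ => pow_le_pow_left₀ ha hab i

lemma myP_one (k : ℕ) : myP 1 k = ((2 * k).factorial : ℝ) := by
  have h : ∀ m : ℕ, myS 1 (m + 1) = (m + 1 : ℝ) := by
    intro m; simp [myS]
  rw [myP]
  simp only [h]
  rw [← Finset.prod_range_add_one_eq_factorial (2 * k)]
  push_cast
  rfl

lemma term_eq (x : ℂ) {q : ℝ} (hq0 : 0 < q) (hq1 : q < 1) (k : ℕ) :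
    qCosTerm q (-(1 / 2)) (((1 - q : ℝ) : ℂ) * x) k
      = (-1) ^ k * (q : ℂ) ^ (k * (k + 1)) * x ^ (2 * k) / ((myP q k : ℝ) : ℂ) := by
  have hexp : (2 * (-(1 / 2) : ℝ) + 2) = 1 := by norm_num
  rw [qCosTerm, hexp, Real.rpow_one, poch_merge]
  have hSr : ∀ m : ℕ, (∑ j ∈ Finset.range (m + 1), (q : ℂ) ^ j) = ((myS q (m + 1) : ℝ) : ℂ) := by
    intro m; rw [myS]; push_cast; rfl
  have hprod : (∏ m ∈ Finset.range (2 * k), (1 - (q : ℂ) ^ (m + 1)))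
      = (1 - (q : ℂ)) ^ (2 * k) * ((myP q k : ℝ) : ℂ) := by
    calc (∏ m ∈ Finset.range (2 * k), (1 - (q : ℂ) ^ (m + 1)))
        = ∏ m ∈ Finset.range (2 * k), ((1 - (q : ℂ)) * ((myS q (m + 1) : ℝ) : ℂ)) := by
          refine Finset.prod_congr rfl fun m _ => ?_
          rw [one_sub_pow, hSr]
      _ = (1 - (q : ℂ)) ^ (2 * k) * ((myP q k : ℝ) : ℂ) := by
          rw [Finset.prod_mul_distrib, Finset.prod_const, Finset.card_range, myP]
          push_cast; rfl
  rw [hprod]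
  have h1q : (1 : ℂ) - (q : ℝ) ≠ 0 := by
    intro h
    have : ((1 - q : ℝ) : ℂ) = 0 := by push_cast; linear_combination h
    rw [Complex.ofReal_eq_zero] at this
    linarith
  have hP : ((myP q k : ℝ) : ℂ) ≠ 0 := by
    rw [Ne, Complex.ofReal_eq_zero]
    exact (myP_pos hq0.le k).ne'
  have hcast : ((1 - q : ℝ) : ℂ) = 1 - (q : ℂ) := by push_cast; ring
  rw [hcast, mul_pow]
  field_simp

lemma myP_continuous (k : ℕ) : Continuous fun q : ℝ => myP q k := by
  unfold myP myS
  exact continuous_finset_prod _ fun m _ =>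
    continuous_finset_sum _ fun j _ => continuous_pow j

lemma term_tendsto (x : ℂ) (k : ℕ) :
    Tendsto (fun q : ℝ => (-1 : ℂ) ^ k * (q : ℂ) ^ (k * (k + 1)) * x ^ (2 * k) / ((myP q k : ℝ) : ℂ))
      (nhdsWithin 1 (Set.Ioo (0:ℝ) 1)) (nhds ((-1) ^ k * x ^ (2 * k) / (((2 * k).factorial : ℕ) : ℂ))) := by
  apply Tendsto.mono_left _ nhdsWithin_le_nhds
  have hnum : Continuous fun q : ℝ => (-1 : ℂ) ^ k * (q : ℂ) ^ (k * (k + 1)) * x ^ (2 * k) := by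
    continuity
  have hden : Continuous fun q : ℝ => ((myP q k : ℝ) : ℂ) :=
    Complex.continuous_ofReal.comp (myP_continuous k)
  have hd0 : ((myP (1 : ℝ) k : ℝ) : ℂ) ≠ 0 := by
    rw [myP_one, Ne, Complex.ofReal_eq_zero]
    exact_mod_cast (Nat.cast_pos.mpr (Nat.factorial_pos (2 * k))).ne'
  have := (hnum.continuousAt (x := (1:ℝ))).div (hden.continuousAt) hd0
  convert this.tendsto using 2
  show _ = (-1 : ℂ) ^ k * ((1:ℝ) : ℂ) ^ (k * (k + 1)) * x ^ (2 * k) / ((myP 1 k : ℝ) : ℂ)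
  rw [myP_one]
  push_cast
  simp
  rfl

lemma myP_bound {q R : ℝ} {N : ℕ} (hq : 0 ≤ q) (hR : 1 ≤ R)
    (hS : ∀ n, N ≤ n → R ≤ myS q n) (k : ℕ) :
    R ^ (2 * k) ≤ R ^ N * myP q k := by
  set T := (Finset.range (2 * k)).filter (fun m => N ≤ m + 1) with hT
  have h1 : R ^ T.card ≤ myP q k := by
    have e1 : R ^ T.card = ∏ _m ∈ T, R := (Finset.prod_const R).symm
    have e2 : (∏ _m ∈ T, R) ≤ ∏ m ∈ T, myS q (m + 1) := by
      exact Finset.prod_le_prod (fun m _ => by linarith)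
        (fun m hm => hS _ (Finset.mem_filter.1 hm).2)
    have e3 : (∏ m ∈ T, myS q (m + 1)) ≤ myP q k := by
      have hsplit := Finset.prod_filter_mul_prod_filter_not (Finset.range (2 * k))
        (fun m => N ≤ m + 1) (fun m => myS q (m + 1))
      have hone : (1:ℝ) ≤ ∏ m ∈ (Finset.range (2 * k)).filter (fun m => ¬ N ≤ m + 1),
          myS q (m + 1) := by
        calc (1:ℝ) = ∏ _m ∈ (Finset.range (2 * k)).filter (fun m => ¬ N ≤ m + 1), (1:ℝ) := by simp
          _ ≤ _ := Finset.prod_le_prod (fun _ _ => zero_le_one) (fun m _ => myS_one_le hq m)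
      have hTnon : (0:ℝ) ≤ ∏ m ∈ T, myS q (m + 1) :=
        Finset.prod_nonneg fun m _ => le_trans zero_le_one (myS_one_le hq m)
      rw [myP, ← hsplit, ← hT]
      nlinarith
    linarith [e1 ▸ e2, e3]
  have h2 : 2 * k ≤ T.card + N := by
    have hcards := Finset.card_filter_add_card_filter_not
      (s := Finset.range (2 * k)) (p := fun m => N ≤ m + 1)
    rw [← hT, Finset.card_range] at hcards
    have hsub : (Finset.range (2 * k)).filter (fun m => ¬ N ≤ m + 1) ⊆ Finset.range N := by
      intro m hm
      simp only [Finset.mem_filter, Finset.mem_range] at hm ⊢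
      omega
    have hc2 := Finset.card_le_card hsub
    rw [Finset.card_range] at hc2
    omega
  have hPpos : (0:ℝ) < myP q k := myP_pos hq k
  calc R ^ (2 * k) ≤ R ^ (T.card + N) := pow_le_pow_right₀ hR h2
    _ = R ^ N * R ^ T.card := by rw [pow_add]; ring
    _ ≤ R ^ N * myP q k := by
        have hRN : (0:ℝ) ≤ R ^ N := by positivity
        nlinarith

lemma term_norm_le {q : ℝ} (hq0 : 0 < q) (hq1 : q < 1) (x : ℂ) (k : ℕ) :
    ‖(-1 : ℂ) ^ k * (q : ℂ) ^ (k * (k + 1)) * x ^ (2 * k) / ((myP q k : ℝ) : ℂ)‖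
      ≤ ‖x‖ ^ (2 * k) / myP q k := by
  have hPpos : (0:ℝ) < myP q k := myP_pos hq0.le k
  rw [norm_div, norm_mul, norm_mul, norm_pow, norm_pow, norm_pow]
  simp only [Complex.norm_real, Real.norm_eq_abs, abs_of_pos hq0, abs_of_pos hPpos,
    norm_neg, norm_one, one_pow, one_mul]
  gcongr
  have h1 : q ^ (k * (k + 1)) ≤ 1 := pow_le_one₀ hq0.le hq1.le
  have h2 : (0:ℝ) ≤ ‖x‖ ^ (2 * k) := by positivity
  nlinarith

/-- lim_{q→1⁻} cos_{-1/2}((1-q)x;q²) = cos x. -/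
theorem qCos_tendsto_cos (x : ℂ) :
    Filter.Tendsto (fun q : ℝ => qCos q (-(1 / 2)) (((1 - q : ℝ) : ℂ) * x))
      (nhdsWithin 1 (Set.Ioo 0 1)) (nhds (Complex.cos x)) := by
  set R : ℝ := ‖x‖ + 1 with hRdef
  have hxR : ‖x‖ < R := by rw [hRdef]; linarith
  have hR1 : (1:ℝ) ≤ R := by rw [hRdef]; have := norm_nonneg x; linarith
  have hRpos : (0:ℝ) < R := by linarith
  set q₀ : ℝ := 1 - 1 / (2 * R) with hq₀def
  have hhalf : 1 / (2 * R) ≤ 1 / 2 := by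
    rw [div_le_div_iff₀ (by linarith) (by norm_num)]
    linarith
  have h2Rpos : (0:ℝ) < 2 * R := by linarith
  have hq₀0 : 0 < q₀ := by
    rw [hq₀def]; linarith
  have hq₀1 : q₀ < 1 := by
    rw [hq₀def]
    have : 0 < 1 / (2 * R) := by positivity
    linarith
  obtain ⟨N, hN⟩ := exists_pow_lt_of_lt_one (show (0:ℝ) < 1/2 by norm_num) hq₀1
  -- lower bound on geometric sums for q ≥ q₀
  have hSlow : ∀ q : ℝ, q₀ ≤ q → ∀ n, N ≤ n → R ≤ myS q n := by
    intro q hq n hn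
    have h1 : myS q₀ n ≤ myS q n := myS_mono hq₀0.le hq n
    have hne : q₀ ≠ 1 := hq₀1.ne
    have h2 : myS q₀ n = 2 * R * (1 - q₀ ^ n) := by
      rw [myS, geom_sum_eq hne, div_eq_iff (sub_ne_zero.mpr hne)]
      have : q₀ - 1 = -(1 / (2 * R)) := by rw [hq₀def]; ring
      rw [this]
      field_simp
      ring
    have h3 : q₀ ^ n ≤ 1 / 2 :=
      le_trans (pow_le_pow_of_le_one hq₀0.le hq₀1.le hn) hN.le
    nlinarith
  -- the dominating function
  set r : ℝ := (‖x‖ / R) ^ 2 with hrdef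
  have hr0 : 0 ≤ r := by positivity
  have hr1 : r < 1 := by
    rw [hrdef]
    have h1 : ‖x‖ / R < 1 := (div_lt_one hRpos).2 hxR
    have h2 : 0 ≤ ‖x‖ / R := by positivity
    nlinarith
  have hsum : Summable (fun k : ℕ => R ^ N * r ^ k) :=
    (summable_geometric_of_lt_one hr0 hr1).mul_left _
  rw [Complex.cos_eq_tsum x]
  simp only [qCos]
  refine tendsto_tsum_of_dominated_convergence hsum ?_ ?_
  · intro k
    refine ((term_tendsto x k).congr' ?_)
    filter_upwards [self_mem_nhdsWithin] with q hq
    exact (term_eq x hq.1 hq.2 k).symm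
  · have hqev : ∀ᶠ q in nhdsWithin 1 (Set.Ioo (0:ℝ) 1), q₀ < q :=
      ((eventually_gt_nhds hq₀1).filter_mono nhdsWithin_le_nhds)
    filter_upwards [self_mem_nhdsWithin, hqev] with q hq hqq₀
    intro k
    rw [term_eq x hq.1 hq.2 k]
    have hkey : R ^ (2 * k) ≤ R ^ N * myP q k :=
      myP_bound hq.1.le hR1 (hSlow q hqq₀.le) k
    refine (term_norm_le hq.1 hq.2 x k).trans ?_
    have hPpos : (0:ℝ) < myP q k := myP_pos hq.1.le k
    have hRk : (0:ℝ) < R ^ (2 * k) := by positivity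
    have hrw : R ^ N * r ^ k = R ^ N * ‖x‖ ^ (2 * k) / R ^ (2 * k) := by
      rw [hrdef, ← pow_mul, div_pow, pow_mul]
      field_simp
    rw [hrw, div_le_div_iff₀ hPpos hRk]
    have hxk : (0:ℝ) ≤ ‖x‖ ^ (2 * k) := by positivity
    calc ‖x‖ ^ (2 * k) * R ^ (2 * k) ≤ ‖x‖ ^ (2 * k) * (R ^ N * myP q k) := by nlinarith
      _ = R ^ N * ‖x‖ ^ (2 * k) * myP q k := by ring
end
end
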